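/- arXiv:2408.15951 — 5 statements merged into one kernel-verified Lean document; each statement's English description precedes it below -/
import Mathlib

section
/- If G and H are connected graphs of order at least 2, then the outer general position number of the strong product satisfies gp_o(G ⊠ H) ≥ gp_o(G) · gp_o(H); in fact, if X and Y are outer general position sets of G and H respectively, then X × Y is an outer general position set of G ⊠ H. -/
open SimpleGraph

/-- `u` and `v` are `X`-positionable in `G`: every shortest `u,v`-path meets `X`
only possibly in its endpoints. -/
def Positionable {V : Type*} (G : SimpleGraph V) (X : Set V) (u v : V) : Prop :=
  ∀ p : G.Walk u v, p.length = G.dist u v → ∀ w ∈ p.support, w ∈ X → w = u ∨ w = v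

/-- `X` is a general position set of `G`. -/
def IsGPSet {V : Type*} (G : SimpleGraph V) (X : Set V) : Prop :=
  ∀ u ∈ X, ∀ v ∈ X, Positionable G X u v

/-- `X` is an outer general position set of `G`. -/
def IsOuterGPSet {V : Type*} (G : SimpleGraph V) (X : Set V) : Prop :=
  IsGPSet G X ∧ ∀ u ∈ X, ∀ v ∉ X, Positionable G X u v

/-- `X` is a dual general position set of `G`. -/
def IsDualGPSet {V : Type*} (G : SimpleGraph V) (X : Set V) : Prop :=
  IsGPSet G X ∧ ∀ u ∉ X, ∀ v ∉ X, Positionable G X u v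

/-- `X` is a total general position set of `G`. -/
def IsTotalGPSet {V : Type*} (G : SimpleGraph V) (X : Set V) : Prop :=
  ∀ u v : V, Positionable G X u v

/-- The outer general position number. -/
noncomputable def gpo {V : Type*} (G : SimpleGraph V) : ℕ :=
  sSup {n | ∃ X : Set V, IsOuterGPSet G X ∧ X.ncard = n}

/-- The dual general position number. -/
noncomputable def gpd {V : Type*} (G : SimpleGraph V) : ℕ :=
  sSup {n | ∃ X : Set V, IsDualGPSet G X ∧ X.ncard = n}

/-- The total general position number. -/
noncomputable def gpt {V : Type*} (G : SimpleGraph V) : ℕ :=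
  sSup {n | ∃ X : Set V, IsTotalGPSet G X ∧ X.ncard = n}

/-- The closed neighborhood `N[u]`. -/
def closedNbhd {V : Type*} (G : SimpleGraph V) (u : V) : Set V :=
  insert u (G.neighborSet u)

/-- A vertex is simplicial if its closed neighborhood induces a complete subgraph. -/
def IsSimplicial {V : Type*} (G : SimpleGraph V) (u : V) : Prop :=
  ∀ x ∈ closedNbhd G u, ∀ y ∈ closedNbhd G u, x ≠ y → G.Adj x y

/-- `s(G)`, the number of simplicial vertices. -/
noncomputable def simplicialNum {V : Type*} (G : SimpleGraph V) : ℕ :=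
  {u | IsSimplicial G u}.ncard

/-- `u` is maximally distant from `v`. -/
def MaxDistant {V : Type*} (G : SimpleGraph V) (u v : V) : Prop :=
  ∀ w, G.Adj u w → G.dist v w ≤ G.dist v u

/-- `u` and `v` are mutually maximally distant. -/
def MMD {V : Type*} (G : SimpleGraph V) (u v : V) : Prop :=
  MaxDistant G u v ∧ MaxDistant G v u

/-- `b(G)`, the number of boundary vertices (vertices MMD with some vertex). -/
noncomputable def boundaryNum {V : Type*} (G : SimpleGraph V) : ℕ :=
  {u | ∃ v, MMD G u v}.ncard

/-- `u` and `v` are true twins: distinct with equal closed neighborhoods. -/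
def TrueTwins {V : Type*} (G : SimpleGraph V) (u v : V) : Prop :=
  u ≠ v ∧ closedNbhd G u = closedNbhd G v

/-- The independence number of `G`. -/
noncomputable def indepNum {V : Type*} (G : SimpleGraph V) : ℕ :=
  sSup {n | ∃ S : Set V, (∀ u ∈ S, ∀ v ∈ S, u ≠ v → ¬ G.Adj u v) ∧ S.ncard = n}

/-- The `k`-independence number `α_k(G)`. -/
noncomputable def kIndepNum {V : Type*} (G : SimpleGraph V) (k : ℕ) : ℕ :=
  sSup {n | ∃ S : Set V, (∀ u ∈ S, ∀ v ∈ S, u ≠ v → k < G.dist u v) ∧ S.ncard = n}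

/-- `G` has diameter `k`. -/
def HasDiam {V : Type*} (G : SimpleGraph V) (k : ℕ) : Prop :=
  (∀ u v, G.dist u v ≤ k) ∧ ∃ u v, G.dist u v = k

/-- The strong product `G ⊠ H`. -/
def StrongProd {α β : Type*} (G : SimpleGraph α) (H : SimpleGraph β) : SimpleGraph (α × β) where
  Adj x y := (x.1 = y.1 ∧ H.Adj x.2 y.2) ∨ (G.Adj x.1 y.1 ∧ x.2 = y.2) ∨
    (G.Adj x.1 y.1 ∧ H.Adj x.2 y.2)
  symm.symm x y h := by
    rcases h with ⟨h1, h2⟩ | ⟨h1, h2⟩ | ⟨h1, h2⟩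
    · exact Or.inl ⟨h1.symm, h2.symm⟩
    · exact Or.inr (Or.inl ⟨h1.symm, h2.symm⟩)
    · exact Or.inr (Or.inr ⟨h1.symm, h2.symm⟩)
  loopless.irrefl x h := by
    rcases h with ⟨_, h2⟩ | ⟨h1, _⟩ | ⟨h1, _⟩
    · exact H.loopless.irrefl _ h2
    · exact G.loopless.irrefl _ h1
    · exact G.loopless.irrefl _ h1

/-- The lexicographic product `G ∘ H`. -/
def LexProd {α β : Type*} (G : SimpleGraph α) (H : SimpleGraph β) : SimpleGraph (α × β) where
  Adj x y := G.Adj x.1 y.1 ∨ (x.1 = y.1 ∧ H.Adj x.2 y.2)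
  symm.symm x y h := by
    rcases h with h1 | ⟨h1, h2⟩
    · exact Or.inl h1.symm
    · exact Or.inr ⟨h1.symm, h2.symm⟩
  loopless.irrefl x h := by
    rcases h with h1 | ⟨_, h2⟩
    · exact G.loopless.irrefl _ h1
    · exact H.loopless.irrefl _ h2


section AuxGP

open SimpleGraph Walk

/-- Pairwise mutual maximal distance within `X` implies outer general position. -/
lemma outerGP_of_MD {V : Type*} {G : SimpleGraph V} {X : Set V}
    (h : ∀ u ∈ X, ∀ w ∈ X, u ≠ w → MaxDistant G w u) : IsOuterGPSet G X := by
  have key : ∀ u ∈ X, ∀ v : V, Positionable G X u v := by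
    classical
    intro u hu v p hp w hwsup hwX
    by_cases hwu : w = u
    · exact Or.inl hwu
    by_cases hwv : w = v
    · exact Or.inr hwv
    exfalso
    have hdu : G.dist u w ≤ (p.takeUntil w hwsup).length := SimpleGraph.dist_le _
    have hdv : G.dist w v ≤ (p.dropUntil w hwsup).length := SimpleGraph.dist_le _
    have hsum : (p.takeUntil w hwsup).length + (p.dropUntil w hwsup).length = p.length := by
      rw [← Walk.length_append, Walk.take_spec]
    have htri : G.dist u v ≤ G.dist u w + G.dist w v := by
      obtain ⟨q1, hq1⟩ := ((p.takeUntil w hwsup).reachable).exists_walk_length_eq_dist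
      obtain ⟨q2, hq2⟩ := ((p.dropUntil w hwsup).reachable).exists_walk_length_eq_dist
      calc G.dist u v ≤ (q1.append q2).length := SimpleGraph.dist_le _
        _ = G.dist u w + G.dist w v := by rw [Walk.length_append, hq1, hq2]
    obtain ⟨x, hadj, rest, hdw⟩ := Walk.exists_eq_cons_of_ne hwv (p.dropUntil w hwsup)
    have hrest : rest.length + 1 = (p.dropUntil w hwsup).length := by
      rw [hdw, Walk.length_cons]
    have hxv : G.dist x v ≤ rest.length := SimpleGraph.dist_le rest
    have htri2 : G.dist u v ≤ G.dist u x + G.dist x v := by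
      obtain ⟨q1, hq1⟩ :=
        (((p.takeUntil w hwsup).append (Walk.cons hadj Walk.nil)).reachable).exists_walk_length_eq_dist
      obtain ⟨q2, hq2⟩ := rest.reachable.exists_walk_length_eq_dist
      calc G.dist u v ≤ (q1.append q2).length := SimpleGraph.dist_le _
        _ = G.dist u x + G.dist x v := by rw [Walk.length_append, hq1, hq2]
    have hMD : G.dist u x ≤ G.dist u w :=
      h u hu w hwX (fun e => hwu e.symm) x hadj
    omega
  exact ⟨fun u hu v _ => key u hu v, fun u hu v _ => key u hu v⟩

/-- Outer general position implies pairwise mutual maximal distance. -/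
lemma MD_of_outerGP {V : Type*} {G : SimpleGraph V} {X : Set V}
    (hG : G.Connected) (hX : IsOuterGPSet G X) :
    ∀ u ∈ X, ∀ w ∈ X, u ≠ w → MaxDistant G w u := by
  intro u hu w hw hne z hadj
  by_contra hlt
  push_neg at hlt
  obtain ⟨q, hq⟩ := hG.exists_walk_length_eq_dist u w
  set r : G.Walk u z := q.append (Walk.cons hadj Walk.nil) with hr
  have hrlen : r.length = G.dist u w + 1 := by
    rw [hr, Walk.length_append, hq, Walk.length_cons, Walk.length_nil]
  have hdz : G.dist u z ≤ G.dist u w + 1 := hrlen ▸ SimpleGraph.dist_le r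
  have hdzeq : G.dist u z = G.dist u w + 1 := by omega
  have hrsp : r.length = G.dist u z := by omega
  have hwmem : w ∈ r.support := by
    rw [hr, Walk.mem_support_append_iff]
    exact Or.inl (Walk.end_mem_support q)
  have hwz : w ≠ z := G.ne_of_adj hadj
  have : w = u ∨ w = z := by
    by_cases hzX : z ∈ X
    · exact hX.1 u hu z hzX r hrsp w hwmem hw
    · exact hX.2 u hu z hzX r hrsp w hwmem hw
  rcases this with h1 | h1
  · exact hne h1.symm
  · exact hwz h1

section Prod

variable {α β : Type*} {G : SimpleGraph α} {H : SimpleGraph β}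

lemma strongProd_dist_fst_le (hG : G.Connected) :
    ∀ {u v : α × β} (p : (StrongProd G H).Walk u v), G.dist u.1 v.1 ≤ p.length := by
  intro u v p
  induction p with
  | nil => simp [SimpleGraph.dist_self]
  | @cons a b c hadj p ih =>
    have h1 : G.dist a.1 b.1 ≤ 1 := by
      rcases hadj with ⟨h1, _⟩ | ⟨h1, _⟩ | ⟨h1, _⟩
      · rw [h1]; simp [SimpleGraph.dist_self]
      · exact le_of_eq (SimpleGraph.dist_eq_one_iff_adj.mpr h1)
      · exact le_of_eq (SimpleGraph.dist_eq_one_iff_adj.mpr h1)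
    calc G.dist a.1 c.1 ≤ G.dist a.1 b.1 + G.dist b.1 c.1 := hG.dist_triangle
      _ ≤ 1 + p.length := Nat.add_le_add h1 ih
      _ = (Walk.cons hadj p).length := by rw [Walk.length_cons]; omega

lemma strongProd_dist_snd_le (hH : H.Connected) :
    ∀ {u v : α × β} (p : (StrongProd G H).Walk u v), H.dist u.2 v.2 ≤ p.length := by
  intro u v p
  induction p with
  | nil => simp [SimpleGraph.dist_self]
  | @cons a b c hadj p ih =>
    have h1 : H.dist a.2 b.2 ≤ 1 := by
      rcases hadj with ⟨_, h1⟩ | ⟨_, h1⟩ | ⟨_, h1⟩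
      · exact le_of_eq (SimpleGraph.dist_eq_one_iff_adj.mpr h1)
      · rw [h1]; simp [SimpleGraph.dist_self]
      · exact le_of_eq (SimpleGraph.dist_eq_one_iff_adj.mpr h1)
    calc H.dist a.2 c.2 ≤ H.dist a.2 b.2 + H.dist b.2 c.2 := hH.dist_triangle
      _ ≤ 1 + p.length := Nat.add_le_add h1 ih
      _ = (Walk.cons hadj p).length := by rw [Walk.length_cons]; omega

lemma walk_snd (G : SimpleGraph α) {g : α} : ∀ {h h' : β} (q : H.Walk h h'),
    ∃ r : (StrongProd G H).Walk (g, h) (g, h'), r.length = q.length := by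
  intro h h' q
  induction q with
  | nil => exact ⟨Walk.nil, rfl⟩
  | @cons x y z hadj q ih =>
    obtain ⟨r, hr⟩ := ih
    have e : (StrongProd G H).Adj (g, x) (g, y) := Or.inl ⟨rfl, hadj⟩
    exact ⟨Walk.cons e r, by simp [Walk.length_cons, hr]⟩

lemma walk_fst (H : SimpleGraph β) {h : β} : ∀ {g g' : α} (p : G.Walk g g'),
    ∃ r : (StrongProd G H).Walk (g, h) (g', h), r.length = p.length := by
  intro g g' p
  induction p with
  | nil => exact ⟨Walk.nil, rfl⟩
  | @cons x y z hadj p ih =>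
    obtain ⟨r, hr⟩ := ih
    have e : (StrongProd G H).Adj (x, h) (y, h) := Or.inr (Or.inl ⟨hadj, rfl⟩)
    exact ⟨Walk.cons e r, by simp [Walk.length_cons, hr]⟩

lemma exists_prod_walk : ∀ {g g' : α} (p : G.Walk g g') {h h' : β} (q : H.Walk h h'),
    ∃ r : (StrongProd G H).Walk (g, h) (g', h'), r.length = max p.length q.length := by
  intro g g' p
  induction p with
  | nil =>
    intro h h' q
    refine Exists.imp ?_ (walk_snd G q)
    intro r hr
    simp [hr]
  | @cons a b c hadj p ih =>
    intro h h' q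
    cases q with
    | nil =>
      refine Exists.imp ?_ (walk_fst H (Walk.cons hadj p))
      intro r hr
      simp [hr]
    | cons hadjH q =>
      obtain ⟨r, hrl⟩ := ih q
      refine ⟨Walk.cons ?_ r, ?_⟩
      · exact Or.inr (Or.inr ⟨hadj, hadjH⟩)
      · show r.length + 1 = max (p.length + 1) (q.length + 1); rw [hrl]
        omega

lemma strongProd_reachable (hG : G.Connected) (hH : H.Connected) (u v : α × β) :
    (StrongProd G H).Reachable u v := by
  obtain ⟨p, _⟩ := hG.exists_walk_length_eq_dist u.1 v.1
  obtain ⟨q, _⟩ := hH.exists_walk_length_eq_dist u.2 v.2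
  obtain ⟨r, _⟩ := exists_prod_walk p q
  exact r.reachable

lemma strongProd_dist (hG : G.Connected) (hH : H.Connected) (u v : α × β) :
    (StrongProd G H).dist u v = max (G.dist u.1 v.1) (H.dist u.2 v.2) := by
  apply le_antisymm
  · obtain ⟨p, hp⟩ := hG.exists_walk_length_eq_dist u.1 v.1
    obtain ⟨q, hq⟩ := hH.exists_walk_length_eq_dist u.2 v.2
    obtain ⟨r, hr⟩ := exists_prod_walk p q
    calc (StrongProd G H).dist u v ≤ r.length := SimpleGraph.dist_le r
      _ = max (G.dist u.1 v.1) (H.dist u.2 v.2) := by rw [hr, hp, hq]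
  · obtain ⟨r, hr⟩ := (strongProd_reachable hG hH u v).exists_walk_length_eq_dist
    exact max_le (hr ▸ strongProd_dist_fst_le hG r) (hr ▸ strongProd_dist_snd_le hH r)

lemma strongProd_MD {X : Set α} {Y : Set β}
    (hG : G.Connected) (hH : H.Connected)
    (hX : IsOuterGPSet G X) (hY : IsOuterGPSet H Y) :
    ∀ u ∈ X ×ˢ Y, ∀ w ∈ X ×ˢ Y, u ≠ w → MaxDistant (StrongProd G H) w u := by
  rintro ⟨g, h⟩ ⟨hg, hh⟩ ⟨a, b⟩ ⟨ha, hb⟩ hne ⟨a', b'⟩ hadj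
  have hcomp : (a' = a ∨ G.Adj a a') ∧ (b' = b ∨ H.Adj b b') := by
    rcases hadj with ⟨h1, h2⟩ | ⟨h1, h2⟩ | ⟨h1, h2⟩
    · exact ⟨Or.inl h1.symm, Or.inr h2⟩
    · exact ⟨Or.inr h1, Or.inl h2.symm⟩
    · exact ⟨Or.inr h1, Or.inr h2⟩
  rw [strongProd_dist hG hH, strongProd_dist hG hH]
  simp only
  have hMDa : a ≠ g → ∀ c, G.Adj a c → G.dist g c ≤ G.dist g a :=
    fun hag => MD_of_outerGP hG hX g hg a ha (fun e => hag e.symm)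
  have hMDb : b ≠ h → ∀ c, H.Adj b c → H.dist h c ≤ H.dist h b :=
    fun hbh => MD_of_outerGP hH hY h hh b hb (fun e => hbh e.symm)
  by_cases hag : a = g
  · have hbh : b ≠ h := by
      intro e; exact hne (by rw [hag, e])
    have h1 : G.dist g a' ≤ 1 := by
      rcases hcomp.1 with h1 | h1
      · rw [h1, hag]; simp [SimpleGraph.dist_self]
      · rw [hag] at h1; exact le_of_eq (SimpleGraph.dist_eq_one_iff_adj.mpr h1)
    have h2 : H.dist h b' ≤ H.dist h b := by
      rcases hcomp.2 with h2 | h2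
      · simp [h2]
      · exact hMDb hbh b' h2
    have h3 : 1 ≤ H.dist h b := hH.pos_dist_of_ne (fun e => hbh e.symm)
    have h4 : G.dist g a = 0 := by rw [hag]; simp
    rw [h4]
    refine max_le (le_trans h1 ?_) (le_trans h2 ?_) <;> simp [h3, le_max_right]
  · by_cases hbh : b = h
    · have h1 : H.dist h b' ≤ 1 := by
        rcases hcomp.2 with h1 | h1
        · rw [h1, hbh]; simp [SimpleGraph.dist_self]
        · rw [hbh] at h1; exact le_of_eq (SimpleGraph.dist_eq_one_iff_adj.mpr h1)
      have h2 : G.dist g a' ≤ G.dist g a := by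
        rcases hcomp.1 with h2 | h2
        · simp [h2]
        · exact hMDa hag a' h2
      have h3 : 1 ≤ G.dist g a := hG.pos_dist_of_ne (fun e => hag e.symm)
      have h4 : H.dist h b = 0 := by rw [hbh]; simp [SimpleGraph.dist_self]
      rw [h4]
      refine max_le (le_trans h2 ?_) (le_trans h1 ?_) <;> simp [h3, le_max_left]
    · have h2 : G.dist g a' ≤ G.dist g a := by
        rcases hcomp.1 with hc | hc
        · simp [hc]
        · exact hMDa hag a' hc
      have h2' : H.dist h b' ≤ H.dist h b := by
        rcases hcomp.2 with hc | hc
        · simp [hc]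
        · exact hMDb hbh b' hc
      exact max_le_max h2 h2'

end Prod

end AuxGP

/-- gp_o(G ⊠ H) ≥ gp_o(G)·gp_o(H); products of outer general position
sets are outer general position sets of the strong product. -/
theorem gpo_strongProd_lower {α β : Type*} [Fintype α] [Fintype β]
    (G : SimpleGraph α) (H : SimpleGraph β) (hG : G.Connected) (hH : H.Connected)
    (h2G : 2 ≤ Fintype.card α) (h2H : 2 ≤ Fintype.card β) :
    gpo G * gpo H ≤ gpo (StrongProd G H) ∧
    ∀ (X : Set α) (Y : Set β), IsOuterGPSet G X → IsOuterGPSet H Y →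
      IsOuterGPSet (StrongProd G H) (X ×ˢ Y) := by
  have main : ∀ (X : Set α) (Y : Set β), IsOuterGPSet G X → IsOuterGPSet H Y →
      IsOuterGPSet (StrongProd G H) (X ×ˢ Y) := by
    intro X Y hX hY
    exact outerGP_of_MD (strongProd_MD hG hH hX hY)
  refine ⟨?_, main⟩
  classical
  set SG := {n | ∃ X : Set α, IsOuterGPSet G X ∧ X.ncard = n} with hSG
  set SH := {n | ∃ Y : Set β, IsOuterGPSet H Y ∧ Y.ncard = n} with hSH
  have hemptyG : IsOuterGPSet G (∅ : Set α) := by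
    constructor
    · intro u hu; exact absurd hu (Set.notMem_empty u)
    · intro u hu; exact absurd hu (Set.notMem_empty u)
  have hemptyH : IsOuterGPSet H (∅ : Set β) := by
    constructor
    · intro u hu; exact absurd hu (Set.notMem_empty u)
    · intro u hu; exact absurd hu (Set.notMem_empty u)
  have hneG : SG.Nonempty := ⟨0, ∅, hemptyG, by simp⟩
  have hneH : SH.Nonempty := ⟨0, ∅, hemptyH, by simp⟩
  have hbddG : BddAbove SG := by
    refine ⟨Fintype.card α, ?_⟩
    rintro n ⟨X, _, rfl⟩
    simpa using Set.ncard_le_ncard (Set.subset_univ X) (Set.toFinite _) |>.trans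
      (le_of_eq (by simp [Set.ncard_univ]))
  have hbddH : BddAbove SH := by
    refine ⟨Fintype.card β, ?_⟩
    rintro n ⟨Y, _, rfl⟩
    simpa using Set.ncard_le_ncard (Set.subset_univ Y) (Set.toFinite _) |>.trans
      (le_of_eq (by simp [Set.ncard_univ]))
  obtain ⟨X, hXgp, hXcard⟩ : gpo G ∈ SG := Nat.sSup_mem hneG hbddG
  obtain ⟨Y, hYgp, hYcard⟩ : gpo H ∈ SH := Nat.sSup_mem hneH hbddH
  have hprodcard : (X ×ˢ Y).ncard = X.ncard * Y.ncard := by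
    rw [← Nat.card_coe_set_eq, ← Nat.card_coe_set_eq, ← Nat.card_coe_set_eq,
      ← Nat.card_prod]
    exact Nat.card_congr (Equiv.Set.prod X Y)
  have hmem : gpo G * gpo H ∈
      {n | ∃ Z : Set (α × β), IsOuterGPSet (StrongProd G H) Z ∧ Z.ncard = n} :=
    ⟨X ×ˢ Y, main X Y hXgp hYgp, by rw [hprodcard, hXcard, hYcard]⟩
  have hbdd : BddAbove {n | ∃ Z : Set (α × β), IsOuterGPSet (StrongProd G H) Z ∧ Z.ncard = n} := by
    refine ⟨Fintype.card (α × β), ?_⟩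
    rintro n ⟨Z, _, rfl⟩
    simpa using Set.ncard_le_ncard (Set.subset_univ Z) (Set.toFinite _) |>.trans
      (le_of_eq (by simp [Set.ncard_univ]))
  exact le_csSup hbdd hmem
end

section
/- If G and H are connected graphs, then s(G)·s(H) ≤ gp_d(G ⊠ H), where s denotes the number of simplicial vertices and gp_d the dual general position number of the strong product. -/
open SimpleGraph

lemma simplicial_not_internal {V : Type*} {G : SimpleGraph V} {w : V}
    (hs : IsSimplicial G w) :
    ∀ {u v : V} (p : G.Walk u v), p.length = G.dist u v → w ∈ p.support →
      w = u ∨ w = v := by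
  intro u v p
  induction p with
  | nil => intro _ hw; simp at hw; exact Or.inl hw
  | @cons u x v h q ih =>
    intro hp hw
    by_cases hwu : w = u
    · exact Or.inl hwu
    have hwq : w ∈ q.support := by
      rcases (SimpleGraph.Walk.mem_support_iff _).mp hw with h1 | h1
      · exact absurd h1 hwu
      · exact h1
    -- q is a shortest walk
    have hql : q.length = G.dist x v := by
      have h1 : G.dist x v ≤ q.length := SimpleGraph.dist_le q
      obtain ⟨r, hr⟩ := q.reachable.exists_walk_length_eq_dist
      have h2 : G.dist u v ≤ (SimpleGraph.Walk.cons h r).length :=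
        SimpleGraph.dist_le _
      simp only [SimpleGraph.Walk.length_cons] at h2 hp
      omega
    rcases ih hql hwq with hwx | hwv
    · -- w = x, the second vertex; analyze q
      subst hwx
      cases q with
      | nil => exact Or.inr rfl
      | @cons _ y _ h' q' =>
        exfalso
        simp only [SimpleGraph.Walk.length_cons] at hp
        by_cases huy : u = y
        · subst huy
          have := SimpleGraph.dist_le q'
          omega
        · have hadj : G.Adj u y := by
            apply hs u (Or.inr h.symm) y (Or.inr h') huy
          have := SimpleGraph.dist_le (SimpleGraph.Walk.cons hadj q')
          simp only [SimpleGraph.Walk.length_cons] at this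
          omega
    · exact Or.inr hwv

lemma simplicial_strongProd {α β : Type*} {G : SimpleGraph α} {H : SimpleGraph β}
    {a : α} {b : β} (ha : IsSimplicial G a) (hb : IsSimplicial H b) :
    IsSimplicial (StrongProd G H) (a, b) := by
  have hmem : ∀ x ∈ closedNbhd (StrongProd G H) (a, b),
      x.1 ∈ closedNbhd G a ∧ x.2 ∈ closedNbhd H b := by
    rintro x (rfl | hx)
    · exact ⟨Or.inl rfl, Or.inl rfl⟩
    · rcases hx with ⟨h1, h2⟩ | ⟨h1, h2⟩ | ⟨h1, h2⟩
      · exact ⟨Or.inl h1.symm, Or.inr h2⟩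
      · exact ⟨Or.inr h1, Or.inl h2.symm⟩
      · exact ⟨Or.inr h1, Or.inr h2⟩
  intro x hx y hy hxy
  obtain ⟨hx1, hx2⟩ := hmem x hx
  obtain ⟨hy1, hy2⟩ := hmem y hy
  by_cases h1 : x.1 = y.1
  · by_cases h2 : x.2 = y.2
    · exact absurd (Prod.ext h1 h2) hxy
    · exact Or.inl ⟨h1, hb x.2 hx2 y.2 hy2 h2⟩
  · by_cases h2 : x.2 = y.2
    · exact Or.inr (Or.inl ⟨ha x.1 hx1 y.1 hy1 h1, h2⟩)
    · exact Or.inr (Or.inr ⟨ha x.1 hx1 y.1 hy1 h1, hb x.2 hx2 y.2 hy2 h2⟩)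

/-- s(G)·s(H) ≤ gp_d(G ⊠ H). -/
theorem gpd_strongProd_lower {α β : Type*} [Fintype α] [Fintype β]
    (G : SimpleGraph α) (H : SimpleGraph β) (hG : G.Connected) (hH : H.Connected) :
    simplicialNum G * simplicialNum H ≤ gpd (StrongProd G H) := by
  classical
  set A : Set α := {a | IsSimplicial G a} with hA
  set B : Set β := {b | IsSimplicial H b} with hB
  set S : Set (α × β) := A ×ˢ B with hS
  have hSsimp : ∀ x ∈ S, IsSimplicial (StrongProd G H) x := by
    rintro ⟨a, b⟩ ⟨ha, hb⟩
    exact simplicial_strongProd ha hb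
  have hpos : ∀ u v : α × β, Positionable (StrongProd G H) S u v := by
    intro u v p hp w hw hwS
    exact simplicial_not_internal (hSsimp w hwS) p hp hw
  have hdual : IsDualGPSet (StrongProd G H) S :=
    ⟨fun u _ v _ => hpos u v, fun u _ v _ => hpos u v⟩
  have hcard : S.ncard = simplicialNum G * simplicialNum H := by
    rw [hS, simplicialNum, simplicialNum, ← Nat.card_coe_set_eq,
      ← Nat.card_coe_set_eq, ← Nat.card_coe_set_eq,
      Nat.card_congr (Equiv.Set.prod A B), Nat.card_prod]
  rw [← hcard]
  apply le_csSup
  · refine ⟨Nat.card (α × β), ?_⟩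
    rintro n ⟨X, _, rfl⟩
    rw [← Set.ncard_univ]
    exact Set.ncard_le_ncard (Set.subset_univ X) Set.finite_univ
  · exact ⟨S, hdual, rfl⟩
end

section
/- If G and H are connected graphs, then gp_d(G ⊠ H) ≤ s(G)·n(H) + s(H)·n(G) − s(G)·s(H), where n denotes order and s the number of simplicial vertices. -/
open SimpleGraph

private lemma exists_bad_pair {V : Type*} {G : SimpleGraph V} {g : V}
    (h : ¬ IsSimplicial G g) :
    ∃ x y, G.Adj g x ∧ G.Adj g y ∧ x ≠ y ∧ ¬ G.Adj x y := by
  simp only [IsSimplicial, not_forall] at h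
  obtain ⟨x, hx, y, hy, hne, hnadj⟩ := h
  simp only [closedNbhd, Set.mem_insert_iff, mem_neighborSet] at hx hy
  rcases hx with rfl | hx
  · rcases hy with rfl | hy
    · exact absurd rfl hne
    · exact absurd hy hnadj
  · rcases hy with rfl | hy
    · exact absurd hx.symm hnadj
    · exact ⟨x, y, hx, hy, hne, hnadj⟩

private lemma middle_vertex {V : Type*} {Γ : SimpleGraph V} {X : Set V} {c d m : V}
    (hX : IsDualGPSet Γ X) (hcm : Γ.Adj c m) (hmd : Γ.Adj m d)
    (hcd : ¬ Γ.Adj c d) (hne : c ≠ d) (hm : m ∈ X) : (c ∈ X ↔ d ∉ X) := by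
  set p : Γ.Walk c d := SimpleGraph.Walk.cons hcm (SimpleGraph.Walk.cons hmd SimpleGraph.Walk.nil)
  have hlen : p.length = 2 := rfl
  have hdist : Γ.dist c d = 2 := by
    have h2 : Γ.dist c d ≤ 2 := hlen ▸ SimpleGraph.dist_le p
    have h0 : Γ.dist c d ≠ 0 := by
      have := (p.reachable).pos_dist_of_ne hne
      omega
    have h1 : Γ.dist c d ≠ 1 := fun h => hcd (SimpleGraph.dist_eq_one_iff_adj.mp h)
    omega
  have hmem : m ∈ p.support := by simp [p]
  constructor
  · intro hc
    intro hd
    have := hX.1 c hc d hd p (by rw [hlen, hdist]) m hmem hm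
    rcases this with rfl | rfl
    · exact Γ.loopless.irrefl _ hcm
    · exact Γ.loopless.irrefl _ hmd
  · intro hd
    by_contra hc
    have := hX.2 c hc d hd p (by rw [hlen, hdist]) m hmem hm
    rcases this with rfl | rfl
    · exact Γ.loopless.irrefl _ hcm
    · exact Γ.loopless.irrefl _ hmd

private lemma dual_subset {α β : Type*} {G : SimpleGraph α} {H : SimpleGraph β}
    {X : Set (α × β)} (hX : IsDualGPSet (StrongProd G H) X) :
    X ⊆ {p : α × β | IsSimplicial G p.1 ∨ IsSimplicial H p.2} := by
  rintro ⟨g, h⟩ hgh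
  by_contra hbad
  simp only [Set.mem_setOf_eq, not_or] at hbad
  obtain ⟨g1, g2, hg1, hg2, hgne, hgnadj⟩ := exists_bad_pair hbad.1
  obtain ⟨h1, h2, hh1, hh2, hhne, hhnadj⟩ := exists_bad_pair hbad.2
  -- corners
  have adj1 : (StrongProd G H).Adj (g1, h1) (g, h) := Or.inr (Or.inr ⟨hg1.symm, hh1.symm⟩)
  have adj2 : (StrongProd G H).Adj (g, h) (g2, h2) := Or.inr (Or.inr ⟨hg2, hh2⟩)
  have adj3 : (StrongProd G H).Adj (g2, h1) (g, h) := Or.inr (Or.inr ⟨hg2.symm, hh1.symm⟩)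
  have adj3' : (StrongProd G H).Adj (g, h) (g2, h1) := adj3.symm
  have nadj_ab : ¬ (StrongProd G H).Adj (g1, h1) (g2, h2) := by
    rintro (⟨e, _⟩ | ⟨e, _⟩ | ⟨e, _⟩)
    · exact hgne e
    · exact hgnadj e
    · exact hgnadj e
  have nadj_aa' : ¬ (StrongProd G H).Adj (g1, h1) (g2, h1) := by
    rintro (⟨e, _⟩ | ⟨e, _⟩ | ⟨e, _⟩)
    · exact hgne e
    · exact hgnadj e
    · exact hgnadj e
  have nadj_ba' : ¬ (StrongProd G H).Adj (g2, h2) (g2, h1) := by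
    rintro (⟨_, e⟩ | ⟨e, f⟩ | ⟨e, _⟩)
    · exact hhnadj e.symm
    · exact G.loopless.irrefl _ e
    · exact G.loopless.irrefl _ e
  have ne_ab : ((g1, h1) : α × β) ≠ (g2, h2) := fun e => hgne (congrArg Prod.fst e)
  have ne_aa' : ((g1, h1) : α × β) ≠ (g2, h1) := fun e => hgne (congrArg Prod.fst e)
  have ne_ba' : ((g2, h2) : α × β) ≠ (g2, h1) := fun e => hhne (congrArg Prod.snd e).symm
  have i1 := middle_vertex hX adj1 adj2 nadj_ab ne_ab hgh
  have i2 := middle_vertex hX adj1 adj3' nadj_aa' ne_aa' hgh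
  have i3 := middle_vertex hX adj2.symm adj3' nadj_ba' ne_ba' hgh
  tauto

private lemma ncard_prod_set {α β : Type*} (s : Set α) (t : Set β) :
    (s ×ˢ t).ncard = s.ncard * t.ncard := by
  rw [← Nat.card_coe_set_eq, ← Nat.card_coe_set_eq, ← Nat.card_coe_set_eq,
    ← Nat.card_prod]
  exact Nat.card_congr (Equiv.Set.prod s t)

/-- gp_d(G ⊠ H) ≤ s(G)·n(H) + s(H)·n(G) − s(G)·s(H). -/
theorem gpd_strongProd_upper {α β : Type*} [Fintype α] [Fintype β]
    (G : SimpleGraph α) (H : SimpleGraph β) (hG : G.Connected) (hH : H.Connected) :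
    gpd (StrongProd G H) ≤
      simplicialNum G * Fintype.card β + simplicialNum H * Fintype.card α -
        simplicialNum G * simplicialNum H := by
  classical
  set SG := {u | IsSimplicial G u}
  set SH := {u | IsSimplicial H u}
  set S : Set (α × β) := {p : α × β | IsSimplicial G p.1 ∨ IsSimplicial H p.2}
  have hSdecomp : S = (SG ×ˢ (Set.univ : Set β)) ∪ ((Set.univ : Set α) ×ˢ SH) := by
    ext ⟨a, b⟩
    simp [S, SG, SH, Set.mem_prod]
  have hinter : (SG ×ˢ (Set.univ : Set β)) ∩ ((Set.univ : Set α) ×ˢ SH) = SG ×ˢ SH := by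
    ext ⟨a, b⟩
    simp [Set.mem_prod, and_comm]
  have hScard : S.ncard = simplicialNum G * Fintype.card β +
      simplicialNum H * Fintype.card α - simplicialNum G * simplicialNum H := by
    have key := Set.ncard_union_add_ncard_inter (SG ×ˢ (Set.univ : Set β))
      ((Set.univ : Set α) ×ˢ SH) (Set.toFinite _) (Set.toFinite _)
    rw [hinter] at key
    have e1 : (SG ×ˢ (Set.univ : Set β)).ncard = simplicialNum G * Fintype.card β := by
      rw [ncard_prod_set, Set.ncard_univ, Nat.card_eq_fintype_card]; rfl
    have e2 : ((Set.univ : Set α) ×ˢ SH).ncard = simplicialNum H * Fintype.card α := by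
      rw [ncard_prod_set, Set.ncard_univ, Nat.card_eq_fintype_card, mul_comm]; rfl
    have e3 : (SG ×ˢ SH).ncard = simplicialNum G * simplicialNum H := by
      rw [ncard_prod_set]; rfl
    rw [hSdecomp, ← e1, ← e2, ← e3]
    omega
  rw [← hScard]
  apply csSup_le'
  rintro n ⟨X, hX, rfl⟩
  exact Set.ncard_le_ncard (dual_subset hX) (Set.toFinite S)
end

section
/- If G and H are connected graphs of order at least 2, then the total general position number of G∘H equals s(G)·n(H) if H is complete, and 0 otherwise. -/
open SimpleGraph

section Aux

variable {V : Type*} {G : SimpleGraph V}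

/-- A simplicial vertex is never internal on a geodesic. -/
lemma simpl_not_internal [DecidableEq V] {u v w : V}
    (hs : IsSimplicial G w) (p : G.Walk u v) (hp : p.length = G.dist u v)
    (hw : w ∈ p.support) : w = u ∨ w = v := by
  by_contra hcon
  push_neg at hcon
  obtain ⟨hwu, hwv⟩ := hcon
  set q : G.Walk w u := (p.takeUntil w hw).reverse with hq
  set r : G.Walk w v := p.dropUntil w hw with hr
  have hlen : q.length + r.length = G.dist u v := by
    rw [hq, hr, Walk.length_reverse, ← hp, ← Walk.length_append, Walk.take_spec]
  obtain ⟨a, haw, qa, hqa⟩ := Walk.exists_eq_cons_of_ne hwu q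
  obtain ⟨b, hbw, rb, hrb⟩ := Walk.exists_eq_cons_of_ne hwv r
  have hqlen : q.length = qa.length + 1 := by rw [hqa]; simp
  have hrlen : r.length = rb.length + 1 := by rw [hrb]; simp
  by_cases hab : a = b
  · subst hab
    have := SimpleGraph.dist_le (qa.reverse.append rb)
    simp [Walk.length_append] at this
    omega
  · have hadj : G.Adj a b :=
      hs a (Or.inr haw) b (Or.inr hbw) hab
    have := SimpleGraph.dist_le (qa.reverse.append (Walk.cons hadj rb))
    simp [Walk.length_append] at this
    omega

/-- A set is a total general position set iff all its members are simplicial. -/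
lemma totalGP_iff [DecidableEq V] (X : Set V) :
    IsTotalGPSet G X ↔ ∀ x ∈ X, IsSimplicial G x := by
  constructor
  · intro hX x hx a ha b hb hab
    by_contra hnadj
    -- a and b are both ≠ x (else they'd be adjacent)
    have hax : a ≠ x := by
      rintro rfl
      rcases hb with rfl | hb
      · exact hab rfl
      · exact hnadj hb
    have hbx : b ≠ x := by
      rintro rfl
      rcases ha with rfl | ha
      · exact hab rfl
      · exact hnadj (G.symm.symm _ _ ha)
    have hxa : G.Adj x a := by
      rcases ha with rfl | ha
      · exact absurd rfl hax
      · exact ha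
    have hxb : G.Adj x b := by
      rcases hb with rfl | hb
      · exact absurd rfl hbx
      · exact hb
    let p : G.Walk a b := Walk.cons hxa.symm (Walk.cons hxb Walk.nil)
    have hd2 : G.dist a b ≤ 2 := by
      simpa [p] using SimpleGraph.dist_le p
    have hd0 : G.dist a b ≠ 0 := by
      intro h
      exact hab ((SimpleGraph.Reachable.dist_eq_zero_iff ⟨p⟩).mp h)
    have hd1 : G.dist a b ≠ 1 := by
      intro h
      exact hnadj (SimpleGraph.dist_eq_one_iff_adj.mp h)
    have hdist : G.dist a b = 2 := by omega
    have hplen : p.length = G.dist a b := by simp [p, hdist]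
    have := hX a b p hplen x (by simp [p]) hx
    rcases this with rfl | rfl
    · exact G.irrefl hxa
    · exact G.irrefl hxb
  · intro hX u v p hp w hwp hw
    exact simpl_not_internal (hX w hw) p hp hwp

/-- The total general position number equals the number of simplicial vertices. -/
lemma gpt_eq_simplicialNum [Fintype V] (G : SimpleGraph V) :
    gpt G = simplicialNum G := by
  classical
  set S : Set V := {u | IsSimplicial G u} with hS
  have hub : ∀ n ∈ {n | ∃ X : Set V, IsTotalGPSet G X ∧ X.ncard = n}, n ≤ S.ncard := by
    rintro n ⟨X, hX, rfl⟩
    exact Set.ncard_le_ncard (fun x hx => (totalGP_iff X).mp hX x hx) (Set.toFinite S)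
  have hmem : S.ncard ∈ {n | ∃ X : Set V, IsTotalGPSet G X ∧ X.ncard = n} :=
    ⟨S, (totalGP_iff S).mpr (fun x hx => hx), rfl⟩
  exact le_antisymm (csSup_le ⟨_, hmem⟩ hub) (le_csSup ⟨S.ncard, hub⟩ hmem)

end Aux

section Lex

variable {α β : Type*} {G : SimpleGraph α} {H : SimpleGraph β}

lemma lex_simplicial_iff (hcomp : ∀ u v : β, u ≠ v → H.Adj u v) (g : α) (h : β) :
    IsSimplicial (LexProd G H) (g, h) ↔ IsSimplicial G g := by
  constructor
  · intro hs a ha b hb hab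
    have hmem : ∀ c ∈ closedNbhd G g, (c, h) ∈ closedNbhd (LexProd G H) (g, h) := by
      rintro c (rfl | hc)
      · exact Or.inl rfl
      · exact Or.inr (Or.inl hc)
    have := hs (a, h) (hmem a ha) (b, h) (hmem b hb)
      (by simp [Prod.ext_iff, hab])
    rcases this with h1 | ⟨h1, _⟩
    · exact h1
    · exact absurd h1 hab
  · intro hg x hx y hy hxy
    have hfst : ∀ z : α × β, z ∈ closedNbhd (LexProd G H) (g, h) → z.1 ∈ closedNbhd G g := by
      rintro z (rfl | hz)
      · exact Or.inl rfl
      · rcases hz with h1 | ⟨h1, _⟩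
        · exact Or.inr h1
        · exact Or.inl h1.symm
    by_cases h1 : x.1 = y.1
    · have h2 : x.2 ≠ y.2 := by
        intro h2
        exact hxy (Prod.ext h1 h2)
      exact Or.inr ⟨h1, hcomp _ _ h2⟩
    · exact Or.inl (hg x.1 (hfst x hx) y.1 (hfst y hy) h1)

lemma lex_no_simplicial [Fintype α] (hG : G.Connected) (h2G : 2 ≤ Fintype.card α)
    (hnc : ¬ ∀ u v : β, u ≠ v → H.Adj u v) (p : α × β) :
    ¬ IsSimplicial (LexProd G H) p := by
  obtain ⟨g, h⟩ := p
  push_neg at hnc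
  obtain ⟨b, b', hbb', hnadj⟩ := hnc
  obtain ⟨g'', hgne⟩ := Fintype.exists_ne_of_one_lt_card (by omega) g
  have hadj : ∃ g', G.Adj g g' := by
    obtain ⟨w⟩ := hG.preconnected g g''
    obtain ⟨x, hx, -, -⟩ := Walk.exists_eq_cons_of_ne (Ne.symm hgne) w
    exact ⟨x, hx⟩
  obtain ⟨g', hgg'⟩ := hadj
  intro hs
  have h1 : ((g', b) : α × β) ∈ closedNbhd (LexProd G H) (g, h) := Or.inr (Or.inl hgg')
  have h2 : ((g', b') : α × β) ∈ closedNbhd (LexProd G H) (g, h) := Or.inr (Or.inl hgg')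
  have := hs (g', b) h1 (g', b') h2 (by simp [Prod.ext_iff, hbb'])
  rcases this with h3 | ⟨-, h3⟩
  · exact G.irrefl h3
  · exact hnadj h3

end Lex

/-- gp_t(G ∘ H) = s(G)·n(H) if H is complete, and 0 otherwise. -/
theorem gpt_lexProd {α β : Type*} [Fintype α] [Fintype β]
    (G : SimpleGraph α) (H : SimpleGraph β) (hG : G.Connected) (hH : H.Connected)
    (h2G : 2 ≤ Fintype.card α) (h2H : 2 ≤ Fintype.card β) :
    ((∀ u v : β, u ≠ v → H.Adj u v) →
      gpt (LexProd G H) = simplicialNum G * Fintype.card β) ∧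
    (¬ (∀ u v : β, u ≠ v → H.Adj u v) → gpt (LexProd G H) = 0) := by
  constructor
  · intro hcomp
    rw [gpt_eq_simplicialNum, simplicialNum]
    have hset : {p : α × β | IsSimplicial (LexProd G H) p}
        = {g | IsSimplicial G g} ×ˢ (Set.univ : Set β) := by
      ext ⟨g, h⟩
      simp [Set.mem_prod, lex_simplicial_iff hcomp]
    have hcard : ({g | IsSimplicial G g} ×ˢ (Set.univ : Set β)).ncard
        = {g | IsSimplicial G g}.ncard * (Set.univ : Set β).ncard := by
      rw [← Nat.card_coe_set_eq, ← Nat.card_coe_set_eq, ← Nat.card_coe_set_eq]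
      exact (Nat.card_congr (Equiv.Set.prod _ _)).trans (Nat.card_prod _ _)
    rw [hset, hcard, Set.ncard_univ, Nat.card_eq_fintype_card, simplicialNum]
  · intro hnc
    rw [gpt_eq_simplicialNum, simplicialNum]
    have hempty : {p : α × β | IsSimplicial (LexProd G H) p} = ∅ := by
      ext p
      simp only [Set.mem_setOf_eq, Set.mem_empty_iff_false, iff_false]
      exact lex_no_simplicial hG h2G hnc p
    rw [hempty, Set.ncard_empty]
end

section
/- If G is a connected graph and n ≥ 1, then gp_d(G ∘ K_n) = n · gp_d(G). -/
open SimpleGraph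

section helpers
variable {α : Type*} {n : ℕ} {G : SimpleGraph α}

def liftWalk (f : α → Fin n) : ∀ {g g' : α}, G.Walk g g' →
    (LexProd G (⊤ : SimpleGraph (Fin n))).Walk (g, f g) (g', f g')
  | _, _, .nil => .nil
  | _, _, .cons h q => .cons (Or.inl h) (liftWalk f q)

@[simp] lemma liftWalk_length (f : α → Fin n) {g g' : α} (q : G.Walk g g') :
    (liftWalk f q).length = q.length := by
  induction q with
  | nil => rfl
  | cons h q ih => simp [liftWalk, ih]; exact congrArg (· + 1) ih

@[simp] lemma liftWalk_support (f : α → Fin n) {g g' : α} (q : G.Walk g g') :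
    (liftWalk f q).support = q.support.map (fun a => (a, f a)) := by
  induction q with
  | nil => rfl
  | cons h q ih => simp [liftWalk, ih]; exact congrArg (List.cons _) ih

lemma exists_projWalk {x y : α × Fin n}
    (p : (LexProd G (⊤ : SimpleGraph (Fin n))).Walk x y) :
    ∃ q : G.Walk x.1 y.1, q.length ≤ p.length ∧ ∀ w ∈ p.support, w.1 ∈ q.support := by
  induction p with
  | nil => exact ⟨.nil, by simp, by simp⟩
  | @cons a b c h p ih =>
    obtain ⟨q, hq1, hq2⟩ := ih
    rcases id h with hadj | ⟨heq, _⟩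
    · refine ⟨.cons hadj q, by simpa using Nat.add_le_add_right hq1 1, ?_⟩
      intro w hw
      rw [SimpleGraph.Walk.support_cons, List.mem_cons] at hw
      rcases hw with rfl | hw
      · simp
      · simp [SimpleGraph.Walk.support_cons, hq2 w hw]
    · refine ⟨q.copy heq.symm rfl, by simpa using Nat.le_succ_of_le hq1, ?_⟩
      intro w hw
      rw [SimpleGraph.Walk.support_cons, List.mem_cons] at hw
      rw [SimpleGraph.Walk.support_copy]
      rcases hw with rfl | hw
      · rw [heq]; exact SimpleGraph.Walk.start_mem_support _
      · exact hq2 w hw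

lemma lex_reachable (hG : G.Connected) (x y : α × Fin n) :
    (LexProd G (⊤ : SimpleGraph (Fin n))).Reachable x y := by
  obtain ⟨g, i⟩ := x
  obtain ⟨g', i'⟩ := y
  classical
  obtain ⟨q, -⟩ := hG.exists_walk_length_eq_dist g g'
  by_cases hgg : g = g'
  · subst hgg
    by_cases hii : i = i'
    · subst hii; exact SimpleGraph.Reachable.refl _
    · exact SimpleGraph.Adj.reachable (Or.inr ⟨rfl, by simpa using hii⟩)
  · set f : α → Fin n := fun a => if a = g' then i' else i with hf
    have h1 : f g = i := by simp [hf, hgg]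
    have h2 : f g' = i' := by simp [hf]
    have w := liftWalk (G := G) f q
    rw [h1, h2] at w
    exact w.reachable

lemma lex_dist (hG : G.Connected) {g g' : α} (i i' : Fin n) (hgg : g ≠ g') :
    (LexProd G (⊤ : SimpleGraph (Fin n))).dist (g, i) (g', i') = G.dist g g' := by
  classical
  apply le_antisymm
  · obtain ⟨q, hq⟩ := hG.exists_walk_length_eq_dist g g'
    set f : α → Fin n := fun a => if a = g' then i' else i with hf
    have h1 : f g = i := by simp [hf, hgg]
    have h2 : f g' = i' := by simp [hf]
    refine le_trans
      (SimpleGraph.dist_le ((liftWalk (G := G) f q).copy (by rw [h1]) (by rw [h2]))) ?_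
    rw [SimpleGraph.Walk.length_copy, liftWalk_length, hq]
  · obtain ⟨p, hp⟩ := (lex_reachable hG (g, i) (g', i')).exists_walk_length_eq_dist
    obtain ⟨q, hq1, -⟩ := exists_projWalk (G := G) p
    calc G.dist g g' ≤ q.length := SimpleGraph.dist_le q
    _ ≤ p.length := hq1
    _ = _ := hp

lemma short_walk_support {V : Type*} {G : SimpleGraph V} {u v : V} (p : G.Walk u v)
    (hp : p.length ≤ 1) : ∀ w ∈ p.support, w = u ∨ w = v := by
  cases p with
  | nil => intro w hw; left; simpa using hw
  | cons h q =>
    cases q with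
    | nil => intro w hw; simpa using hw
    | cons h' q' => simp [SimpleGraph.Walk.length_cons] at hp

lemma dist_add_dist_le {V : Type*} {G : SimpleGraph V} {u v w : V} (p : G.Walk u v)
    (hp : p.length = G.dist u v) (hw : w ∈ p.support) :
    G.dist u w + G.dist w v ≤ G.dist u v := by
  classical
  calc G.dist u w + G.dist w v
      ≤ (p.takeUntil w hw).length + (p.dropUntil w hw).length :=
        Nat.add_le_add (SimpleGraph.dist_le _) (SimpleGraph.dist_le _)
    _ = p.length := by rw [← SimpleGraph.Walk.length_append, p.take_spec hw]
    _ = G.dist u v := hp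

lemma eq_start_of_fst_eq (hG : G.Connected) {g g' : α} {i i' : Fin n} (hgg : g ≠ g')
    {p : (LexProd G (⊤ : SimpleGraph (Fin n))).Walk (g, i) (g', i')}
    (hp : p.length = (LexProd G (⊤ : SimpleGraph (Fin n))).dist (g, i) (g', i'))
    {w : α × Fin n} (hw : w ∈ p.support) (h1 : w.1 = g) : w = (g, i) := by
  obtain ⟨h0, j⟩ := w
  replace h1 : g = h0 := h1.symm
  subst h1
  by_cases hji : j = i
  · rw [hji]
  · exfalso
    have hd1 : (LexProd G (⊤ : SimpleGraph (Fin n))).dist (g, i) (g, j) = 1 :=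
      SimpleGraph.dist_eq_one_iff_adj.mpr (Or.inr ⟨rfl, by simpa using (Ne.symm hji)⟩)
    have hd2 : (LexProd G (⊤ : SimpleGraph (Fin n))).dist (g, j) (g', i') = G.dist g g' :=
      lex_dist hG j i' hgg
    have hd3 : (LexProd G (⊤ : SimpleGraph (Fin n))).dist (g, i) (g', i') = G.dist g g' :=
      lex_dist hG i i' hgg
    have := dist_add_dist_le p hp hw
    rw [hd1, hd2, hd3] at this
    omega

lemma positionable_prod (hG : G.Connected) {S : Set α} {g g' : α} {i i' : Fin n}
    (hpos : Positionable G S g g') :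
    Positionable (LexProd G (⊤ : SimpleGraph (Fin n))) (S ×ˢ (Set.univ : Set (Fin n)))
      (g, i) (g', i') := by
  intro p hp w hw hwX
  by_cases hgg : g = g'
  · subst hgg
    refine short_walk_support p ?_ w hw
    rw [hp]
    by_cases hii : i = i'
    · subst hii; rw [SimpleGraph.dist_self]; omega
    · have : (LexProd G (⊤ : SimpleGraph (Fin n))).Adj (g, i) (g, i') :=
        Or.inr ⟨rfl, by simpa using hii⟩
      rw [SimpleGraph.dist_eq_one_iff_adj.mpr this]
  · have hd : p.length = G.dist g g' := by rw [hp, lex_dist hG i i' hgg]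
    obtain ⟨q, hq1, hq2⟩ := exists_projWalk (G := G) p
    have hqlen : q.length = G.dist g g' :=
      le_antisymm (hd ▸ hq1) (SimpleGraph.dist_le q)
    have hw1S : w.1 ∈ S := (Set.mem_prod.mp hwX).1
    rcases hpos q hqlen w.1 (hq2 w hw) hw1S with h1 | h1
    · exact Or.inl (eq_start_of_fst_eq hG hgg hp hw h1)
    · right
      have hp' : p.reverse.length =
          (LexProd G (⊤ : SimpleGraph (Fin n))).dist (g', i') (g, i) := by
        rw [SimpleGraph.Walk.length_reverse, hp, SimpleGraph.dist_comm]
      exact eq_start_of_fst_eq hG (Ne.symm hgg) hp'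
        (by rwa [SimpleGraph.Walk.support_reverse, List.mem_reverse]) h1

lemma dualGP_prod (hG : G.Connected) {S : Set α} (hS : IsDualGPSet G S) :
    IsDualGPSet (LexProd G (⊤ : SimpleGraph (Fin n))) (S ×ˢ (Set.univ : Set (Fin n))) := by
  constructor
  · rintro ⟨g, i⟩ hu ⟨g', i'⟩ hv
    exact positionable_prod hG (hS.1 g (Set.mem_prod.mp hu).1 g' (Set.mem_prod.mp hv).1)
  · rintro ⟨g, i⟩ hu ⟨g', i'⟩ hv
    exact positionable_prod hG
      (hS.2 g (fun hgS => hu ⟨hgS, Set.mem_univ i⟩)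
        g' (fun hgS => hv ⟨hgS, Set.mem_univ i'⟩))

lemma positionable_proj (hG : G.Connected) {X : Set (α × Fin n)} {g g' : α} {i i' : Fin n}
    (hpos : Positionable (LexProd G (⊤ : SimpleGraph (Fin n))) X (g, i) (g', i')) :
    Positionable G (Prod.fst '' X) g g' := by
  classical
  intro q hq h hh hhS
  by_cases hgg : g = g'
  · subst hgg
    have hlen : q.length ≤ 1 := by rw [hq, SimpleGraph.dist_self]; omega
    rcases short_walk_support q hlen h hh with h1 | h1 <;> exact Or.inl h1
  by_cases hhg : h = g
  · exact Or.inl hhg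
  by_cases hhg' : h = g'
  · exact Or.inr hhg'
  obtain ⟨⟨h0, j⟩, hjX, hj1⟩ := hhS
  replace hj1 : h0 = h := hj1
  subst h
  set f : α → Fin n := fun a => if a = h0 then j else if a = g then i else i' with hf
  have hgh : ¬ (g = h0) := fun hc => hhg hc.symm
  have hgh' : ¬ (g' = h0) := fun hc => hhg' hc.symm
  have hgg' : ¬ (g' = g) := fun hc => hgg hc.symm
  have hfg : f g = i := by simp [hf, hgh]
  have hfg' : f g' = i' := by simp [hf, hgh', hgg']
  have hfh : f h0 = j := by simp [hf]
  have hL : ((liftWalk (G := G) f q).copy (by rw [hfg]) (by rw [hfg'])).length =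
      (LexProd G (⊤ : SimpleGraph (Fin n))).dist (g, i) (g', i') := by
    rw [SimpleGraph.Walk.length_copy, liftWalk_length, hq, lex_dist hG i i' hgg]
  have hsupp : (h0, j) ∈
      ((liftWalk (G := G) f q).copy (by rw [hfg]) (by rw [hfg'])).support := by
    rw [SimpleGraph.Walk.support_copy, liftWalk_support]
    exact List.mem_map.mpr ⟨h0, hh, by rw [hfh]⟩
  rcases hpos _ hL (h0, j) hsupp hjX with he | he
  · exact Or.inl (congrArg Prod.fst he)
  · exact Or.inr (congrArg Prod.fst he)

lemma dualGP_proj (hG : G.Connected) (hn : 1 ≤ n) {X : Set (α × Fin n)}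
    (hX : IsDualGPSet (LexProd G (⊤ : SimpleGraph (Fin n))) X) :
    IsDualGPSet G (Prod.fst '' X) := by
  constructor
  · rintro g ⟨⟨g0, i⟩, hgi, rfl⟩ g' ⟨⟨g0', i'⟩, hgi', rfl⟩
    exact positionable_proj hG (hX.1 _ hgi _ hgi')
  · intro g hg g' hg'
    have i0 : Fin n := ⟨0, hn⟩
    refine positionable_proj (i := i0) (i' := i0) hG (hX.2 _ ?_ _ ?_)
    · exact fun hc => hg ⟨(g, i0), hc, rfl⟩
    · exact fun hc => hg' ⟨(g', i0), hc, rfl⟩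

lemma ncard_prod_univ (S : Set α) :
    (S ×ˢ (Set.univ : Set (Fin n))).ncard = S.ncard * n := by
  have h1 : Nat.card (Set.univ : Set (Fin n)) = n := by
    rw [Nat.card_congr (Equiv.Set.univ (Fin n)), Nat.card_eq_fintype_card, Fintype.card_fin]
  rw [← Nat.card_coe_set_eq, Nat.card_congr (Equiv.Set.prod S Set.univ), Nat.card_prod,
    h1, Nat.card_coe_set_eq]

end helpers

lemma hempty {V : Type*} (H : SimpleGraph V) : IsDualGPSet H (∅ : Set V) :=
  ⟨fun u hu => absurd hu (Set.notMem_empty u),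
    fun u _ v _ p _ w _ hwX => absurd hwX (Set.notMem_empty w)⟩

/-- gp_d(G ∘ K_n) = n·gp_d(G). -/
theorem gpd_lexProd_complete {α : Type*} [Fintype α] (G : SimpleGraph α)
    (hG : G.Connected) (n : ℕ) (hn : 1 ≤ n) :
    gpd (LexProd G (⊤ : SimpleGraph (Fin n))) = n * gpd G := by
  classical
  set T1 := {m | ∃ X : Set (α × Fin n),
    IsDualGPSet (LexProd G (⊤ : SimpleGraph (Fin n))) X ∧ X.ncard = m} with hT1
  set T2 := {m | ∃ S : Set α, IsDualGPSet G S ∧ S.ncard = m} with hT2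
  have hT1ne : T1.Nonempty := ⟨0, ∅, hempty (LexProd G (⊤ : SimpleGraph (Fin n))), by simp⟩
  have hT2ne : T2.Nonempty := ⟨0, ∅, hempty G, by simp⟩
  have hT1bdd : BddAbove T1 := ⟨(Set.univ : Set (α × Fin n)).ncard, by
    rintro m ⟨X, -, rfl⟩
    exact Set.ncard_le_ncard (Set.subset_univ X) Set.finite_univ⟩
  have hT2bdd : BddAbove T2 := ⟨(Set.univ : Set α).ncard, by
    rintro m ⟨S, -, rfl⟩
    exact Set.ncard_le_ncard (Set.subset_univ S) Set.finite_univ⟩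
  have hg1 : gpd (LexProd G (⊤ : SimpleGraph (Fin n))) = sSup T1 := rfl
  have hg2 : gpd G = sSup T2 := rfl
  apply le_antisymm
  · obtain ⟨X, hX, hXc⟩ := Nat.sSup_mem hT1ne hT1bdd
    rw [hg1, ← hXc]
    have hS := dualGP_proj hG hn hX
    have hsub : X ⊆ (Prod.fst '' X) ×ˢ (Set.univ : Set (Fin n)) := by
      rintro ⟨a, b⟩ hab; exact ⟨⟨(a, b), hab, rfl⟩, Set.mem_univ b⟩
    calc X.ncard ≤ ((Prod.fst '' X) ×ˢ (Set.univ : Set (Fin n))).ncard :=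
          Set.ncard_le_ncard hsub (Set.toFinite _)
    _ = (Prod.fst '' X).ncard * n := ncard_prod_univ _
    _ ≤ gpd G * n := Nat.mul_le_mul_right n
          (by rw [hg2]; exact le_csSup hT2bdd ⟨_, hS, rfl⟩)
    _ = n * gpd G := Nat.mul_comm _ _
  · obtain ⟨S, hS, hSc⟩ := Nat.sSup_mem hT2ne hT2bdd
    rw [hg1, hg2, ← hSc]
    have hmem : S.ncard * n ∈ T1 := ⟨_, dualGP_prod (n := n) hG hS, ncard_prod_univ S⟩
    calc n * S.ncard = S.ncard * n := Nat.mul_comm _ _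
    _ ≤ sSup T1 := le_csSup hT1bdd hmem
end
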